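/- Let f : ℝ^n → ℝ be differentiable and convex, x ∈ [-B',B']^n and x* ∈ [-B,B]^n with B' ≥ B > 0. Let F = {i : |x_i| < B or ∇_i f(x)·x_i ≥ 0} and S = supp(x). Then ‖∇_F f(x)‖_∞ · ‖x*‖₁ + ‖∇_{S∩F} f(x)‖_∞ · ‖x‖₁ ≥ f(x) - f(x*). -/

import Mathlib

open Real


-- gradient inequality for convex differentiable functions
lemma convex_grad_ineq {n : ℕ} (f : (Fin n → ℝ) → ℝ)
    (hdiff : Differentiable ℝ f) (hconv : ConvexOn ℝ Set.univ f)
    (x y : Fin n → ℝ) :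
    f x - f y ≤ fderiv ℝ f x (x - y) := by
  set v : Fin n → ℝ := y - x with hv
  set g : ℝ → ℝ := fun t => f (x + t • v) with hg
  have hgc : ConvexOn ℝ Set.univ g := by
    have := hconv.comp_affineMap (AffineMap.lineMap x y : ℝ →ᵃ[ℝ] (Fin n → ℝ))
    convert this.subset (Set.subset_univ _) convex_univ using 1
    iterate 4 rfl
    funext t
    simp [g, AffineMap.lineMap_apply, v, add_comm]
  have hder : HasDerivAt g (fderiv ℝ f x v) 0 := by
    have h1 : HasDerivAt (fun t : ℝ => x + t • v) v 0 := by
      simpa using ((hasDerivAt_id (0:ℝ)).smul_const v).const_add x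
    have h2 := (hdiff (x + (0:ℝ) • v)).hasFDerivAt.comp_hasDerivAt 0 h1
    simpa [g, Function.comp_def] using h2
  have hslope := hgc.le_slope_of_hasDerivAt (Set.mem_univ 0) (Set.mem_univ 1)
    one_pos hder
  have h3 : fderiv ℝ f x v ≤ f y - f x := by
    have hxy : x + v = y := by simp [hv]
    simpa [slope, g, hxy] using hslope
  have hmap : fderiv ℝ f x (x - y) = -(fderiv ℝ f x v) := by
    rw [hv, ← map_neg]; congr 1; abel
  rw [hmap]; linarith

lemma fderiv_apply_eq_sum {n : ℕ} (L : (Fin n → ℝ) →L[ℝ] ℝ) (v : Fin n → ℝ) :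
    L v = ∑ i, v i * L (Pi.single i 1) := by
  have hv : v = ∑ i, v i • (Pi.single i 1 : Fin n → ℝ) := by
    funext j
    simp [Finset.sum_apply, Pi.single_apply]
  conv_lhs => rw [hv]
  rw [map_sum]
  simp [smul_eq_mul]


/-- Gradient lower bound over the sets F = {i : |xᵢ| < B or ∇ᵢf(x)·xᵢ ≥ 0} and
S = supp(x): ‖∇_F f(x)‖_∞ ‖x*‖₁ + ‖∇_{S∩F} f(x)‖_∞ ‖x‖₁ ≥ f(x) - f(x*). -/
theorem gradient_lower_bound
    {n : ℕ} (f : (Fin n → ℝ) → ℝ)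
    (hdiff : Differentiable ℝ f) (hconv : ConvexOn ℝ Set.univ f)
    (B B' : ℝ) (hB : 0 < B) (hBB' : B ≤ B')
    (x xs : Fin n → ℝ)
    (hx : ∀ i, |x i| ≤ B') (hxs : ∀ i, |xs i| ≤ B)
    (D : Fin n → ℝ) (hD : ∀ i, D i = fderiv ℝ f x (Pi.single i 1)) :
    (⨆ i : {i : Fin n // |x i| < B ∨ 0 ≤ D i * x i}, |D i.1|) * (∑ i, |xs i|) +
      (⨆ i : {i : Fin n // x i ≠ 0 ∧ (|x i| < B ∨ 0 ≤ D i * x i)}, |D i.1|) *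
        (∑ i, |x i|)
      ≥ f x - f xs := by
  set A : ℝ := ⨆ i : {i : Fin n // |x i| < B ∨ 0 ≤ D i * x i}, |D i.1| with hA
  set C : ℝ := ⨆ i : {i : Fin n // x i ≠ 0 ∧ (|x i| < B ∨ 0 ≤ D i * x i)}, |D i.1| with hC
  have hAle : ∀ i : Fin n, (|x i| < B ∨ 0 ≤ D i * x i) → |D i| ≤ A := by
    intro i hi
    exact le_ciSup (f := fun j : {i : Fin n // |x i| < B ∨ 0 ≤ D i * x i} => |D j.1|)
      (Set.Finite.bddAbove (Set.finite_range _)) ⟨i, hi⟩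
  have hCle : ∀ i : Fin n, (x i ≠ 0 ∧ (|x i| < B ∨ 0 ≤ D i * x i)) → |D i| ≤ C := by
    intro i hi
    exact le_ciSup (f := fun j : {i : Fin n // x i ≠ 0 ∧ (|x i| < B ∨ 0 ≤ D i * x i)} => |D j.1|)
      (Set.Finite.bddAbove (Set.finite_range _)) ⟨i, hi⟩
  have hA0 : 0 ≤ A := by
    rcases isEmpty_or_nonempty {i : Fin n // |x i| < B ∨ 0 ≤ D i * x i} with h | h
    · rw [hA, Real.iSup_of_isEmpty]
    · exact le_trans (abs_nonneg _) (hAle h.some.1 h.some.2)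
  have hC0 : 0 ≤ C := by
    rcases isEmpty_or_nonempty {i : Fin n // x i ≠ 0 ∧ (|x i| < B ∨ 0 ≤ D i * x i)} with h | h
    · rw [hC, Real.iSup_of_isEmpty]
    · exact le_trans (abs_nonneg _) (hCle h.some.1 h.some.2)
  have hgrad : f x - f xs ≤ fderiv ℝ f x (x - xs) := convex_grad_ineq f hdiff hconv x xs
  have hexp : fderiv ℝ f x (x - xs) = ∑ i, (x i - xs i) * D i := by
    rw [fderiv_apply_eq_sum]
    congr 1; funext i; rw [hD i]; simp
  have hterm : ∀ i : Fin n, (x i - xs i) * D i ≤ A * |xs i| + C * |x i| := by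
    intro i
    by_cases hF : |x i| < B ∨ 0 ≤ D i * x i
    · have h1 : |D i| ≤ A := hAle i hF
      have h2 : |D i| * |x i| ≤ C * |x i| := by
        by_cases hx0 : x i = 0
        · simp [hx0]
        · exact mul_le_mul_of_nonneg_right (hCle i ⟨hx0, hF⟩) (abs_nonneg _)
      have h3 : (x i - xs i) * D i ≤ |D i| * |x i| + |D i| * |xs i| := by
        calc (x i - xs i) * D i ≤ |(x i - xs i) * D i| := le_abs_self _
          _ = |x i - xs i| * |D i| := by rw [abs_mul]
          _ ≤ (|x i| + |xs i|) * |D i| := by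
              exact mul_le_mul_of_nonneg_right (abs_sub _ _) (abs_nonneg _)
          _ = |D i| * |x i| + |D i| * |xs i| := by ring
      have h4 : |D i| * |xs i| ≤ A * |xs i| :=
        mul_le_mul_of_nonneg_right h1 (abs_nonneg _)
      linarith
    · push_neg at hF
      obtain ⟨hBx, hDx⟩ := hF
      have hxsB : -B ≤ xs i ∧ xs i ≤ B := abs_le.mp (hxs i)
      have hnp : (x i - xs i) * D i ≤ 0 := by
        rcases le_or_gt 0 (x i) with h | h
        · have hxB : B ≤ x i := by rwa [abs_of_nonneg h] at hBx
          have hDneg : D i ≤ 0 := by nlinarith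
          nlinarith
        · have hxB : x i ≤ -B := by
            have := abs_of_neg h; linarith [hBx]
          have hDpos : 0 ≤ D i := by nlinarith
          nlinarith
      have : 0 ≤ A * |xs i| + C * |x i| := by positivity
      linarith
  have hsum : ∑ i, (x i - xs i) * D i ≤ A * (∑ i, |xs i|) + C * (∑ i, |x i|) := by
    calc ∑ i, (x i - xs i) * D i ≤ ∑ i, (A * |xs i| + C * |x i|) :=
        Finset.sum_le_sum (fun i _ => hterm i)
      _ = A * (∑ i, |xs i|) + C * (∑ i, |x i|) := by
        rw [Finset.sum_add_distrib, Finset.mul_sum, Finset.mul_sum]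
  rw [ge_iff_le]
  calc f x - f xs ≤ ∑ i, (x i - xs i) * D i := hexp ▸ hgrad
    _ ≤ A * (∑ i, |xs i|) + C * (∑ i, |x i|) := hsum
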